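/- Let α ∈ (2/3, 1), let p ∈ [0, 1], and for integers i ≥ 1 define p_i = (2/4^i)·((2i−2)!/((i−1)!·(i+1)!))·(2/α − 2)^i·((3α−2)i + 1). Then αp − (1/2)·Σ_{i≥1} i·p_i = αp − (1/2)(α − √α·√(3α−2)), and this quantity is strictly positive if and only if p > (1/2)(1 − √(3 − 2/α)). -/

import Mathlib

open Finset

lemma catalan_le_four_pow (n : ℕ) : (catalan n : ℝ) ≤ 4 ^ n := by
  have h1 : catalan n ≤ n.centralBinom := by
    have h := succ_mul_catalan_eq_centralBinom n
    calc catalan n ≤ (n + 1) * catalan n := Nat.le_mul_of_pos_left _ n.succ_pos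
    _ = n.centralBinom := h
  have h2 : n.centralBinom ≤ 4 ^ n := by
    have h3 : n.centralBinom ≤ ∑ i ∈ range (2 * n + 1), (2 * n).choose i := by
      exact single_le_sum (f := fun i => (2 * n).choose i) (fun i _ => Nat.zero_le _)
        (mem_range.2 (by omega))
    rw [Nat.sum_range_choose] at h3
    calc n.centralBinom ≤ 2 ^ (2 * n) := h3
    _ = 4 ^ n := by rw [pow_mul]; norm_num
  calc (catalan n : ℝ) ≤ (n.centralBinom : ℝ) := by exact_mod_cast h1
  _ ≤ ((4 ^ n : ℕ) : ℝ) := by exact_mod_cast h2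
  _ = 4 ^ n := by push_cast; ring

lemma catalan_nonneg (n : ℕ) : (0:ℝ) ≤ (catalan n : ℝ) := Nat.cast_nonneg _

lemma summable_np1_geom {r : ℝ} (hr : |r| < 1) :
    Summable (fun n : ℕ => ((n:ℝ)+1) * r ^ n) := by
  have h1 := summable_pow_mul_geometric_of_norm_lt_one (R := ℝ) 1 (by rwa [Real.norm_eq_abs])
  have h2 := summable_pow_mul_geometric_of_norm_lt_one (R := ℝ) 0 (by rwa [Real.norm_eq_abs])
  have := h1.add h2
  refine this.congr fun n => ?_
  ring

lemma abs4 {y : ℝ} (hy : |y| < 1/4) : abs (4 * |y|) < 1 := by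
  rw [abs_of_nonneg (by positivity)]; linarith

lemma summable_f1 {y : ℝ} (hy : |y| < 1/4) :
    Summable (fun n : ℕ => ‖((n:ℝ)+1) * (catalan n : ℝ) * y ^ n‖) := by
  refine Summable.of_nonneg_of_le (fun n => norm_nonneg _) (fun n => ?_)
    (summable_np1_geom (abs4 hy))
  rw [Real.norm_eq_abs, abs_mul, abs_mul, abs_pow]
  rw [abs_of_nonneg (by positivity : (0:ℝ) ≤ (n:ℝ)+1), abs_of_nonneg (catalan_nonneg n),
    mul_pow]
  calc ((n:ℝ)+1) * (catalan n : ℝ) * |y|^n ≤ ((n:ℝ)+1) * 4^n * |y|^n := by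
        gcongr
        exact catalan_le_four_pow n
  _ = ((n:ℝ)+1) * (4^n * |y|^n) := by ring

lemma cat_pow_le {y : ℝ} (n : ℕ) : (catalan n : ℝ) * |y|^n ≤ ((n:ℝ)+1) * (4^n * |y|^n) := by
  calc (catalan n : ℝ) * |y|^n ≤ 4^n * |y|^n := by
        gcongr
        exact catalan_le_four_pow n
  _ ≤ ((n:ℝ)+1) * (4^n * |y|^n) := by
        apply le_mul_of_one_le_left (by positivity)
        have : (0:ℝ) ≤ (n:ℝ) := Nat.cast_nonneg n
        linarith

lemma summable_f2 {y : ℝ} (hy : |y| < 1/4) :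
    Summable (fun n : ℕ => ‖(catalan n : ℝ) * y ^ (n+1)‖) := by
  refine Summable.of_nonneg_of_le (fun n => norm_nonneg _) (fun n => ?_)
    ((summable_np1_geom (abs4 hy)).mul_left |y|)
  rw [Real.norm_eq_abs, abs_mul, abs_pow, abs_of_nonneg (catalan_nonneg n), pow_succ]
  calc (catalan n : ℝ) * (|y|^n * |y|) = |y| * ((catalan n : ℝ) * |y|^n) := by ring
  _ ≤ |y| * (((n:ℝ)+1) * (4^n * |y|^n)) := by
        apply mul_le_mul_of_nonneg_left (cat_pow_le n) (abs_nonneg y)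
  _ = |y| * (((n:ℝ)+1) * (4*|y|)^n) := by rw [mul_pow]

lemma summable_f3 {y : ℝ} (hy : |y| < 1/4) :
    Summable (fun n : ℕ => ‖(catalan n : ℝ) * y ^ (n+2) / ((n:ℝ)+2)‖) := by
  refine Summable.of_nonneg_of_le (fun n => norm_nonneg _) (fun n => ?_)
    (((summable_np1_geom (abs4 hy)).mul_left (|y| * |y|)))
  rw [Real.norm_eq_abs, abs_div, abs_mul, abs_pow, abs_of_nonneg (catalan_nonneg n),
    abs_of_nonneg (by positivity : (0:ℝ) ≤ (n:ℝ)+2)]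
  calc (catalan n : ℝ) * |y| ^ (n+2) / ((n:ℝ)+2) ≤ (catalan n : ℝ) * |y| ^ (n+2) / 1 := by
        apply div_le_div_of_nonneg_left ?_ ?_ ?_
        · positivity
        · norm_num
        · have : (0:ℝ) ≤ (n:ℝ) := Nat.cast_nonneg n; linarith
  _ = (|y| * |y|) * ((catalan n : ℝ) * |y|^n) := by
        rw [show n+2 = n+1+1 from rfl, pow_succ, pow_succ]; ring
  _ ≤ (|y| * |y|) * (((n:ℝ)+1) * (4^n * |y|^n)) := by
        apply mul_le_mul_of_nonneg_left (cat_pow_le n) (by positivity)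
  _ = (|y| * |y|) * (((n:ℝ)+1) * (4*|y|)^n) := by rw [mul_pow]

noncomputable def gcat (y : ℝ) : ℝ := ∑' n : ℕ, (catalan n : ℝ) * y ^ (n+1)

noncomputable def Hcat (y : ℝ) : ℝ := ∑' n : ℕ, (catalan n : ℝ) * y ^ (n+2) / ((n:ℝ)+2)

lemma gcat_zero : gcat 0 = 0 := by
  have : ∀ n : ℕ, (catalan n : ℝ) * (0:ℝ) ^ (n+1) = 0 := by intro n; simp
  unfold gcat
  rw [tsum_congr this, tsum_zero]

lemma Hcat_zero : Hcat 0 = 0 := by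
  have : ∀ n : ℕ, (catalan n : ℝ) * (0:ℝ) ^ (n+2) / ((n:ℝ)+2) = 0 := by intro n; simp
  unfold Hcat
  rw [tsum_congr this, tsum_zero]

lemma mem_lt_quarter {x₀ y : ℝ} (h4 : x₀ < 1/4) (hy : y ∈ Set.Ioo (-x₀) x₀) : |y| < 1/4 := by
  rw [abs_lt]; constructor <;> [linarith [hy.1]; linarith [hy.2]]

lemma hasDerivAt_gcat {x₀ y : ℝ} (h4 : x₀ < 1/4) (hy : y ∈ Set.Ioo (-x₀) x₀) :
    HasDerivAt gcat (∑' n : ℕ, ((n:ℝ)+1) * (catalan n : ℝ) * y ^ n) y := by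
  have hx₀ : 0 < x₀ := by rcases hy with ⟨h1, h2⟩; linarith
  exact hasDerivAt_tsum_of_isPreconnected (u := fun n : ℕ => ((n:ℝ)+1) * (4*x₀) ^ n)
    (F := ℝ)
    ((summable_np1_geom (r := 4*x₀) (by rw [abs_of_pos (by linarith)]; linarith)))
    isOpen_Ioo (convex_Ioo _ _).isPreconnected
    (g := fun n z => (catalan n : ℝ) * z ^ (n+1))
    (g' := fun n z => ((n:ℝ)+1) * (catalan n : ℝ) * z ^ n)
    (fun n z _ => by
      have h := (hasDerivAt_pow (n+1) z).const_mul (catalan n : ℝ)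
      simpa [Nat.add_sub_cancel, mul_comm, mul_assoc, mul_left_comm] using h)
    (fun n z hz => by
      have hzx : |z| ≤ x₀ := le_of_lt (abs_lt.2 ⟨hz.1, hz.2⟩)
      rw [Real.norm_eq_abs, abs_mul, abs_mul, abs_pow,
        abs_of_nonneg (by positivity : (0:ℝ) ≤ (n:ℝ)+1), abs_of_nonneg (catalan_nonneg n)]
      calc ((n:ℝ)+1) * (catalan n : ℝ) * |z|^n ≤ ((n:ℝ)+1) * 4^n * x₀^n := by
            gcongr <;> first | exact abs_nonneg z | exact catalan_le_four_pow n | exact hzx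
      _ = ((n:ℝ)+1) * (4*x₀)^n := by rw [mul_pow]; ring)
    (y₀ := 0) (Set.mem_Ioo.2 ⟨by linarith, hx₀⟩)
    (Summable.congr (summable_zero) fun n => by simp) hy

lemma hasDerivAt_Hcat {x₀ y : ℝ} (h4 : x₀ < 1/4) (hy : y ∈ Set.Ioo (-x₀) x₀) :
    HasDerivAt Hcat (gcat y) y := by
  have hx₀ : 0 < x₀ := by rcases hy with ⟨h1, h2⟩; linarith
  exact hasDerivAt_tsum_of_isPreconnected (u := fun n : ℕ => (4*x₀) ^ n * x₀)
    (F := ℝ)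
    (((summable_geometric_of_lt_one (by positivity) (by linarith)).mul_right x₀))
    isOpen_Ioo (convex_Ioo _ _).isPreconnected
    (g := fun n z => (catalan n : ℝ) * z ^ (n+2) / ((n:ℝ)+2))
    (g' := fun n z => (catalan n : ℝ) * z ^ (n+1))
    (fun n z _ => by
      have h := ((hasDerivAt_pow (n+2) z).const_mul (catalan n : ℝ)).div_const ((n:ℝ)+2)
      have h2 : (catalan n : ℝ) * (((n:ℕ)+2 : ℕ) * z ^ (n+2-1)) / ((n:ℝ)+2)
          = (catalan n : ℝ) * z ^ (n+1) := by
        push_cast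
        field_simp
      rw [h2] at h
      exact h)
    (fun n z hz => by
      have hzx : |z| ≤ x₀ := le_of_lt (abs_lt.2 ⟨hz.1, hz.2⟩)
      rw [Real.norm_eq_abs, abs_mul, abs_pow, abs_of_nonneg (catalan_nonneg n)]
      calc (catalan n : ℝ) * |z|^(n+1) ≤ 4^n * (x₀^n * x₀) := by
            rw [pow_succ]
            gcongr <;> first | exact abs_nonneg z | exact catalan_le_four_pow n | exact hzx
      _ = (4*x₀)^n * x₀ := by rw [mul_pow]; ring)
    (y₀ := 0) (Set.mem_Ioo.2 ⟨by linarith, hx₀⟩)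
    (Summable.congr (summable_zero) fun n => by simp) hy

lemma gcat_sq {y : ℝ} (hy : |y| < 1/4) : gcat y * gcat y = gcat y - y := by
  unfold gcat
  rw [tsum_mul_tsum_eq_tsum_sum_antidiagonal_of_summable_norm (summable_f2 hy) (summable_f2 hy)]
  have key : ∀ n : ℕ, ∑ kl ∈ Finset.HasAntidiagonal.antidiagonal n,
      ((catalan kl.1 : ℝ) * y ^ (kl.1+1)) * ((catalan kl.2 : ℝ) * y ^ (kl.2+1))
      = (catalan (n+1) : ℝ) * y ^ (n+2) := by
    intro n
    rw [catalan_succ' n]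
    push_cast
    rw [Finset.sum_mul]
    apply Finset.sum_congr rfl
    intro kl hkl
    have h := Finset.HasAntidiagonal.mem_antidiagonal.1 hkl
    have : kl.1 + 1 + (kl.2 + 1) = n + 2 := by omega
    rw [← this, pow_add]
    ring
  rw [tsum_congr key]
  have hs : Summable (fun n : ℕ => (catalan n : ℝ) * y ^ (n+1)) := (summable_f2 hy).of_norm
  have h0 := Summable.tsum_eq_zero_add hs
  simp only [pow_succ, pow_zero, one_mul, catalan_zero, Nat.cast_one] at h0 ⊢
  rw [h0]
  push_cast
  ring_nf
  exact tsum_congr fun b => by ring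

lemma gcat_contOn {y : ℝ} (hy4 : y < 1/4) (hy0 : 0 ≤ y) :
    ContinuousOn gcat (Set.Icc 0 y) := by
  intro z hz
  rw [Set.mem_Icc] at hz
  have hz' : z ∈ Set.Ioo (-((y+1/4)/2)) ((y+1/4)/2) :=
    Set.mem_Ioo.2 ⟨by linarith [hz.1, hz.2], by linarith [hz.1, hz.2]⟩
  exact ((hasDerivAt_gcat (by linarith) hz').continuousAt).continuousWithinAt

lemma gcat_le_half {y : ℝ} (hy0 : 0 ≤ y) (hy4 : y < 1/4) : gcat y ≤ 1/2 := by
  by_contra h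
  push_neg at h
  have hcont := gcat_contOn hy4 hy0
  have hIVT := intermediate_value_Icc hy0 hcont
  have hmem : (1/2 : ℝ) ∈ Set.Icc (gcat 0) (gcat y) := by
    rw [gcat_zero]
    exact ⟨by norm_num, le_of_lt h⟩
  obtain ⟨z, hz, hgz⟩ := hIVT hmem
  have hz4 : |z| < 1/4 := by
    rw [abs_of_nonneg hz.1]; exact lt_of_le_of_lt hz.2 hy4
  have := gcat_sq hz4
  rw [hgz] at this
  norm_num at this
  have : z = 1/4 := by linarith
  have := hz.2
  linarith

lemma gcat_eq {y : ℝ} (hy0 : 0 ≤ y) (hy4 : y < 1/4) :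
    gcat y = (1 - Real.sqrt (1 - 4*y)) / 2 := by
  have hy' : |y| < 1/4 := by rw [abs_of_nonneg hy0]; exact hy4
  have hsq := gcat_sq hy'
  have hle := gcat_le_half hy0 hy4
  have key : (1 - 2 * gcat y)^2 = 1 - 4*y := by ring_nf; nlinarith [hsq]
  have h1 : Real.sqrt (1 - 4*y) = 1 - 2 * gcat y := by
    rw [← key, Real.sqrt_sq (by linarith)]
  rw [h1]; ring

lemma hasDerivAt_lin (y : ℝ) : HasDerivAt (fun z : ℝ => 1 - 4*z) (-4) y := by
  have h := ((hasDerivAt_id y).const_mul (4:ℝ)).const_sub 1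
  simpa using h

lemma hasDerivAt_phi {y : ℝ} (hy : y < 1/4) :
    HasDerivAt (fun z : ℝ => (1 - Real.sqrt (1 - 4*z)) / 2) (1 / Real.sqrt (1 - 4*y)) y := by
  have hu : (0:ℝ) < 1 - 4*y := by linarith
  have hne : (1 - 4*y) ≠ 0 := ne_of_gt hu
  have hsq := (Real.hasDerivAt_sqrt hne).comp y (hasDerivAt_lin y)
  have h := (hsq.const_sub 1).div_const 2
  refine h.congr_deriv ?_
  have hs : (0:ℝ) < Real.sqrt (1 - 4*y) := Real.sqrt_pos.2 hu
  field_simp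
  ring

lemma hasDerivAt_psi {y : ℝ} (hy : y < 1/4) :
    HasDerivAt (fun z : ℝ => z/2 + ((1 - 4*z) * Real.sqrt (1 - 4*z) - 1) / 12)
      ((1 - Real.sqrt (1 - 4*y)) / 2) y := by
  have hu : (0:ℝ) < 1 - 4*y := by linarith
  have hne : (1 - 4*y) ≠ 0 := ne_of_gt hu
  have hs : (0:ℝ) < Real.sqrt (1 - 4*y) := Real.sqrt_pos.2 hu
  have hsq := (Real.hasDerivAt_sqrt hne).comp y (hasDerivAt_lin y)
  have hmul := (hasDerivAt_lin y).mul hsq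
  have h := (((hasDerivAt_id y).div_const 2).add (((hmul.sub_const 1).div_const 12)))
  refine h.congr_deriv ?_
  have h2 : Real.sqrt (1 - 4*y) * Real.sqrt (1 - 4*y) = 1 - 4*y :=
    Real.mul_self_sqrt (le_of_lt hu)
  simp only [Function.comp_apply]
  field_simp
  nlinarith [h2, hs]

lemma tsum_deriv_eq {x : ℝ} (h0 : 0 < x) (h4 : x < 1/4) :
    ∑' n : ℕ, ((n:ℝ)+1) * (catalan n : ℝ) * x ^ n = 1 / Real.sqrt (1 - 4*x) := by
  set x₀ := (x + 1/4)/2 with hx₀def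
  have hx₀4 : x₀ < 1/4 := by rw [hx₀def]; linarith
  have hmem : x ∈ Set.Ioo (-x₀) x₀ := Set.mem_Ioo.2 ⟨by rw [hx₀def]; linarith, by rw [hx₀def]; linarith⟩
  have hg := hasDerivAt_gcat hx₀4 hmem
  have hEq : (fun z : ℝ => (1 - Real.sqrt (1 - 4*z)) / 2) =ᶠ[nhds x] gcat := by
    have hopen : Set.Ioo (0:ℝ) x₀ ∈ nhds x :=
      isOpen_Ioo.mem_nhds (Set.mem_Ioo.2 ⟨h0, hmem.2⟩)
    filter_upwards [hopen] with z hz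
    exact (gcat_eq (le_of_lt hz.1) (lt_trans hz.2 hx₀4)).symm
  have hg' := hg.congr_of_eventuallyEq hEq
  exact hg'.unique (hasDerivAt_phi h4)

lemma Hcat_eq {x : ℝ} (h0 : 0 ≤ x) (h4 : x < 1/4) :
    Hcat x = x/2 + ((1 - 4*x) * Real.sqrt (1 - 4*x) - 1) / 12 := by
  set x₀ := (x + 1/4)/2 with hx₀def
  have hx₀4 : x₀ < 1/4 := by rw [hx₀def]; linarith
  have hx₀0 : 0 < x₀ := by rw [hx₀def]; linarith
  have hsub : ∀ z ∈ Set.Icc 0 x, z ∈ Set.Ioo (-x₀) x₀ := by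
    intro z hz
    rw [Set.mem_Icc] at hz
    exact Set.mem_Ioo.2 ⟨by linarith [hz.1], by rw [hx₀def]; linarith [hz.2]⟩
  have key := eq_of_has_deriv_right_eq (a := 0) (b := x)
    (f' := fun y => (1 - Real.sqrt (1 - 4*y)) / 2)
    (f := Hcat) (g := fun z : ℝ => z/2 + ((1 - 4*z) * Real.sqrt (1 - 4*z) - 1) / 12)
    (fun y hy => by
      have hy' := hsub y (Set.Ico_subset_Icc_self hy)
      have hd := hasDerivAt_Hcat hx₀4 hy'
      rw [gcat_eq hy.1 (lt_trans hy'.2 hx₀4)] at hd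
      exact hd.hasDerivWithinAt)
    (fun y hy => by
      have hy' := hsub y (Set.Ico_subset_Icc_self hy)
      exact (hasDerivAt_psi (lt_trans hy'.2 hx₀4)).hasDerivWithinAt)
    (fun y hy => ((hasDerivAt_Hcat hx₀4 (hsub y hy)).continuousAt).continuousWithinAt)
    (by
      apply Continuous.continuousOn
      have hc : Continuous (fun z : ℝ => 1 - 4*z) := by continuity
      exact (continuous_id.div_const 2).add
        ((((hc.mul (Real.continuous_sqrt.comp hc)).sub continuous_const).div_const 12)))
    (by rw [Hcat_zero]; norm_num)
  have := key x (Set.mem_Icc.2 ⟨h0, le_refl x⟩)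
  exact this

lemma fact_ratio (n : ℕ) :
    ((Nat.factorial (2*n) : ℝ)) / ((Nat.factorial n : ℝ) * (Nat.factorial (n+2) : ℝ))
      = (catalan n : ℝ) / ((n:ℝ)+2) := by
  have h1 : Nat.centralBinom n * (Nat.factorial n * Nat.factorial n) = Nat.factorial (2*n) := by
    have h := Nat.choose_mul_factorial_mul_factorial (by omega : n ≤ 2*n)
    have h2 : 2*n - n = n := by omega
    rw [h2] at h
    rw [Nat.centralBinom, ← h]
    ring
  have h2 := succ_mul_catalan_eq_centralBinom n
  have hfact : ((Nat.factorial (2*n) : ℝ)) = ((n:ℝ)+1) * (catalan n : ℝ) *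
      (Nat.factorial n : ℝ) * (Nat.factorial n : ℝ) := by
    rw [← h1, ← h2]
    push_cast
    ring
  have hfact2 : (Nat.factorial (n+2) : ℝ) = ((n:ℝ)+2) * (((n:ℝ)+1) * (Nat.factorial n : ℝ)) := by
    rw [show n+2 = (n+1)+1 from rfl, Nat.factorial_succ, Nat.factorial_succ]
    push_cast
    ring
  rw [hfact, hfact2]
  have hne : (Nat.factorial n : ℝ) ≠ 0 := by positivity
  have hne1 : ((n:ℝ)+1) ≠ 0 := by positivity
  have hne2 : ((n:ℝ)+2) ≠ 0 := by positivity
  field_simp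

lemma main_tsum {α : ℝ} (hα0 : 2/3 < α) (hα1 : α < 1) (p : ℕ → ℝ)
    (hp : ∀ i : ℕ, 1 ≤ i →
      p i = 2 / 4 ^ i *
        ((Nat.factorial (2 * i - 2) : ℝ) /
          ((Nat.factorial (i - 1) : ℝ) * (Nat.factorial (i + 1) : ℝ))) *
        (2 / α - 2) ^ i * ((3 * α - 2) * (i : ℝ) + 1)) :
    (∑' i : ℕ, ((i : ℝ) + 1) * p (i + 1)) = α - Real.sqrt α * Real.sqrt (3 * α - 2) := by
  have hα : 0 < α := by linarith
  set x := (1-α)/(2*α) with hxdef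
  have hx0 : 0 < x := by rw [hxdef]; exact div_pos (by linarith) (by linarith)
  have hx4 : x < 1/4 := by rw [hxdef, div_lt_iff₀ (by linarith)]; linarith
  have hx' : |x| < 1/4 := by rw [abs_of_pos hx0]; exact hx4
  have hβ : 2/α - 2 = 4*x := by rw [hxdef]; field_simp; ring
  have hαx : 2*α*x = 1-α := by rw [hxdef]; field_simp
  have hterm : ∀ n : ℕ, ((n:ℝ)+1) * p (n+1) =
      (2*(3*α-2)*x) * (((n:ℝ)+1) * (catalan n : ℝ) * x^n)
      + ((2*(3-3*α)) * ((catalan n : ℝ) * x^(n+1))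
      + (2*(3*α-3)/x) * ((catalan n : ℝ) * x^(n+2) / ((n:ℝ)+2))) := by
    intro n
    rw [hp (n+1) (by omega)]
    have e1 : 2*(n+1) - 2 = 2*n := by omega
    have e2 : (n+1) - 1 = n := by omega
    rw [e1, e2, show (n+1)+1 = n+2 from rfl, fact_ratio n, hβ, mul_pow]
    have hne : ((n:ℝ)+2) ≠ 0 := by positivity
    have h4 : ((4:ℝ))^(n+1) ≠ 0 := by positivity
    push_cast
    field_simp
    ring
  rw [tsum_congr hterm]
  have hs1 : Summable (fun n : ℕ => ((n:ℝ)+1) * (catalan n : ℝ) * x^n) := (summable_f1 hx').of_norm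
  have hs2 : Summable (fun n : ℕ => (catalan n : ℝ) * x^(n+1)) := (summable_f2 hx').of_norm
  have hs3 : Summable (fun n : ℕ => (catalan n : ℝ) * x^(n+2) / ((n:ℝ)+2)) := (summable_f3 hx').of_norm
  rw [Summable.tsum_add (hs1.mul_left _) ((hs2.mul_left _).add (hs3.mul_left _)),
    Summable.tsum_add (hs2.mul_left _) (hs3.mul_left _), tsum_mul_left, tsum_mul_left, tsum_mul_left]
  have hT1 : (∑' n : ℕ, ((n:ℝ)+1) * (catalan n : ℝ) * x^n) = 1 / Real.sqrt (1-4*x) :=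
    tsum_deriv_eq hx0 hx4
  have hT2 : (∑' n : ℕ, (catalan n : ℝ) * x^(n+1)) = (1 - Real.sqrt (1-4*x))/2 :=
    gcat_eq hx0.le hx4
  have hT3 : (∑' n : ℕ, (catalan n : ℝ) * x^(n+2) / ((n:ℝ)+2))
      = x/2 + ((1-4*x) * Real.sqrt (1-4*x) - 1)/12 := Hcat_eq hx0.le hx4
  rw [hT1, hT2, hT3]
  set s := Real.sqrt (1-4*x) with hsdef
  have hu0 : (0:ℝ) < 1-4*x := by linarith
  have hs0 : 0 < s := Real.sqrt_pos.2 hu0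
  have hss : s*s = 1-4*x := Real.mul_self_sqrt hu0.le
  have hsqa : Real.sqrt α * Real.sqrt (3*α-2) = α * s := by
    rw [← Real.sqrt_mul hα.le]
    have h : α * (3*α-2) = (α^2) * (1-4*x) := by rw [hxdef]; field_simp; ring
    rw [h, Real.sqrt_mul (sq_nonneg α), hsdef, Real.sqrt_sq hα.le]
  rw [hsqa]
  have hP1 : 2*(3*α-2)*x * (1/s) = (1-α)*s := by
    have h : 2*(3*α-2)*x = (1-α)*(s*s) := by
      rw [hss]
      linear_combination hαx
    rw [h]
    field_simp
  have hP3 : 2*(3*α-3)/x * (x/2 + ((1-4*x)*s - 1)/12) = 3*α-3 - α*(s*(s*s)) + α := by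
    rw [← hss]
    field_simp
    have hinv : α * α⁻¹ = 1 := mul_inv_cancel₀ hα.ne'
    linear_combination (6*(s*(s*s)) - 6) * hαx
  linear_combination hP1 + hP3 + 2*s*hαx - α*s*hss

theorem percolation_expected_change
    (α : ℝ) (hα0 : 2 / 3 < α) (hα1 : α < 1)
    (q : ℝ) (hq0 : 0 ≤ q) (hq1 : q ≤ 1)
    (p : ℕ → ℝ)
    (hp : ∀ i : ℕ, 1 ≤ i →
      p i = 2 / 4 ^ i *
        ((Nat.factorial (2 * i - 2) : ℝ) /
          ((Nat.factorial (i - 1) : ℝ) * (Nat.factorial (i + 1) : ℝ))) *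
        (2 / α - 2) ^ i * ((3 * α - 2) * (i : ℝ) + 1)) :
    α * q - (1 / 2) * (∑' i : ℕ, ((i : ℝ) + 1) * p (i + 1)) =
        α * q - (1 / 2) * (α - Real.sqrt α * Real.sqrt (3 * α - 2)) ∧
      (0 < α * q - (1 / 2) * (∑' i : ℕ, ((i : ℝ) + 1) * p (i + 1)) ↔
        q > (1 / 2) * (1 - Real.sqrt (3 - 2 / α))) := by
  have hα : 0 < α := by linarith
  have hS := main_tsum (by linarith) hα1 p hp
  refine ⟨by rw [hS], ?_⟩
  rw [hS]
  set s := Real.sqrt (3 - 2/α) with hsdef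
  have hsqa : Real.sqrt α * Real.sqrt (3*α-2) = α * s := by
    rw [← Real.sqrt_mul hα.le]
    have h : α * (3*α-2) = α^2 * (3 - 2/α) := by field_simp
    rw [h, Real.sqrt_mul (sq_nonneg α), hsdef, Real.sqrt_sq hα.le]
  rw [hsqa]
  constructor
  · intro h
    by_contra hc
    push_neg at hc
    nlinarith [mul_nonneg hα.le (by linarith : (0:ℝ) ≤ 1/2*(1-s) - q)]
  · intro h
    have := mul_pos hα (by linarith : (0:ℝ) < q - 1/2*(1-s))
    nlinarith
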